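/- With D = ∂_x + d∂_y, D̄ = ∂_x + conj(d)∂_y, and K, L, M as in the mode conversion model, the quadratic form Q(x,y) = ½(Kx² + 2Lxy + My²) satisfies DQ = (1 + 1/μ)x, D̄Q = μy − x, and DD̄Q = dμ − 1 = 1 + 1/μ. -/

import Mathlib

open Complex

/-- Partial derivative in the first variable of a function of two real variables. -/
noncomputable def pdx (f : ℝ → ℝ → ℂ) (x y : ℝ) : ℂ := deriv (fun t => f t y) x

/-- Partial derivative in the second variable of a function of two real variables. -/
noncomputable def pdy (f : ℝ → ℝ → ℂ) (x y : ℝ) : ℂ := deriv (fun t => f x t) y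

lemma hd0 (x : ℝ) : HasDerivAt (fun t : ℝ => (t : ℂ)) 1 x := by
  exact Complex.ofRealCLM.hasDerivAt (x := x)

lemma hderiv (a b c : ℂ) (x : ℝ) :
    deriv (fun t : ℝ => a * ((t : ℂ) * (t : ℂ)) + (b * (t : ℂ) + c)) x
      = 2 * a * (x : ℂ) + b := by
  have h2 : HasDerivAt (fun t : ℝ => (t : ℂ) * (t : ℂ)) (1 * (x:ℂ) + (x:ℂ) * 1) x :=
    (hd0 x).mul (hd0 x)
  have h : HasDerivAt (fun t : ℝ => a * ((t : ℂ) * (t : ℂ)) + (b * (t : ℂ) + c))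
      (a * (1 * (x:ℂ) + (x:ℂ) * 1) + (b * 1)) x :=
    (h2.const_mul a).add (((hd0 x).const_mul b).add_const c)
  rw [h.deriv]; ring

/-- With `D = ∂_x + d∂_y`, `D̄ = ∂_x + conj(d)∂_y` and `K, L, M` as in the mode conversion
model, the quadratic form `Q(x,y) = ½(Kx² + 2Lxy + My²)` satisfies `DQ = (1 + 1/μ)x`,
`D̄Q = μy − x`, and `DD̄Q = dμ − 1 = 1 + 1/μ`. -/
theorem stmt_10 (d μ K L M : ℂ) (hd : d.im ≠ 0) (hμ : μ ≠ 0)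
    (hdμ : d * μ = 2 + μ⁻¹)
    (hK : K = -1 + d * (starRingEnd ℂ) d * μ / ((starRingEnd ℂ) d - d))
    (hL : L = -(d * μ) / ((starRingEnd ℂ) d - d))
    (hM : M = μ / ((starRingEnd ℂ) d - d))
    (Q : ℝ → ℝ → ℂ)
    (hQ : ∀ x y : ℝ, Q x y =
      (K * (x : ℂ) ^ 2 + 2 * L * (x : ℂ) * (y : ℂ) + M * (y : ℂ) ^ 2) / 2) :
    (∀ x y : ℝ, pdx Q x y + d * pdy Q x y = (1 + μ⁻¹) * (x : ℂ)) ∧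
    (∀ x y : ℝ, pdx Q x y + (starRingEnd ℂ) d * pdy Q x y = μ * (y : ℂ) - (x : ℂ)) ∧
    (∀ x y : ℝ,
      pdx (fun a b => pdx Q a b + (starRingEnd ℂ) d * pdy Q a b) x y
        + d * pdy (fun a b => pdx Q a b + (starRingEnd ℂ) d * pdy Q a b) x y
      = d * μ - 1 ∧ d * μ - 1 = 1 + μ⁻¹) := by
  have hc : (starRingEnd ℂ) d - d ≠ 0 := by
    rw [sub_ne_zero]
    intro h
    exact hd (Complex.conj_eq_iff_im.mp h)
  have hpx : ∀ x y : ℝ, pdx Q x y = K * (x : ℂ) + L * (y : ℂ) := by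
    intro x y
    have he : (fun t : ℝ => Q t y)
        = fun t : ℝ => (K / 2) * ((t:ℂ) * (t:ℂ)) + ((L * (y:ℂ)) * (t:ℂ) + M * (y:ℂ)^2 / 2) := by
      funext t; rw [hQ]; ring
    rw [pdx, he, hderiv]; ring
  have hpy : ∀ x y : ℝ, pdy Q x y = L * (x : ℂ) + M * (y : ℂ) := by
    intro x y
    have he : (fun t : ℝ => Q x t)
        = fun t : ℝ => (M / 2) * ((t:ℂ) * (t:ℂ)) + ((L * (x:ℂ)) * (t:ℂ) + K * (x:ℂ)^2 / 2) := by
      funext t; rw [hQ]; ring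
    rw [pdy, he, hderiv]; ring
  have hA : K + d * L = d * μ - 1 := by
    rw [hK, hL]; field_simp; ring
  have hB : L + d * M = 0 := by rw [hL, hM]; ring
  have hC : K + (starRingEnd ℂ) d * L = -1 := by
    rw [hK, hL]; field_simp; ring
  have hD : L + (starRingEnd ℂ) d * M = μ := by
    rw [hL, hM]; field_simp; ring
  have hlast : d * μ - 1 = 1 + μ⁻¹ := by rw [hdμ]; ring
  have hbar : ∀ x y : ℝ,
      pdx Q x y + (starRingEnd ℂ) d * pdy Q x y = μ * (y : ℂ) - (x : ℂ) := by
    intro x y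
    rw [hpx, hpy]
    linear_combination (x : ℂ) * hC + (y : ℂ) * hD
  refine ⟨?_, hbar, ?_⟩
  · intro x y
    rw [hpx, hpy]
    calc K * (x:ℂ) + L * (y:ℂ) + d * (L * (x:ℂ) + M * (y:ℂ))
        = (K + d * L) * (x:ℂ) + (L + d * M) * (y:ℂ) := by ring
      _ = (1 + μ⁻¹) * (x : ℂ) := by rw [hA, hB, hlast]; ring
  · intro x y
    have hfun : (fun a b : ℝ => pdx Q a b + (starRingEnd ℂ) d * pdy Q a b)
        = fun a b : ℝ => μ * (b : ℂ) - (a : ℂ) := by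
      funext a b; exact hbar a b
    rw [hfun]
    have h1 : pdx (fun a b : ℝ => μ * (b : ℂ) - (a : ℂ)) x y = -1 := by
      have he : (fun t : ℝ => μ * (y : ℂ) - (t : ℂ))
          = fun t : ℝ => (0 : ℂ) * ((t:ℂ) * (t:ℂ)) + ((-1) * (t:ℂ) + μ * (y:ℂ)) := by
        funext t; ring
      rw [pdx, he, hderiv]; ring
    have h2 : pdy (fun a b : ℝ => μ * (b : ℂ) - (a : ℂ)) x y = μ := by
      have he : (fun t : ℝ => μ * (t : ℂ) - (x : ℂ))
          = fun t : ℝ => (0 : ℂ) * ((t:ℂ) * (t:ℂ)) + (μ * (t:ℂ) + (-(x:ℂ))) := by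
        funext t; ring
      rw [pdy, he, hderiv]; ring
    rw [h1, h2]
    exact ⟨by ring, hlast⟩
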